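/- (Stability condition, skewness-threshold form) Let ω̄ > 0, δ̄ > 0 and 0 < c < 1, and let P(λ) = λ⁴ + 2λ²(ω̄² - 1) + (ω̄² + 1)² - δ̄² over ℂ. Then every root λ ∈ ℂ of P satisfies Re(λ) < c if and only if δ̄ > 2√(1 - c²) and √( √(δ̄² + 4c²) - 1 - c² ) < ω̄ < √( δ̄²/(4(1 - c²)) - c² ). -/

import Mathlib

lemma root_pair (c : ℝ) (hc : 0 < c) (s : ℂ) :
    (∀ μ : ℂ, μ ^ 2 = s → μ.re < c) ↔ ‖s‖ + s.re < 2 * c ^ 2 := by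
  have habs := Complex.abs_re_le_norm s
  have h1 : -s.re ≤ ‖s‖ := by cases abs_cases s.re <;> linarith [abs_le.mp habs]
  have h2 : s.re ≤ ‖s‖ := Complex.re_le_norm s
  constructor
  · intro h
    set a : ℝ := Real.sqrt ((‖s‖ + s.re) / 2) with ha
    set b : ℝ := Real.sqrt ((‖s‖ - s.re) / 2) with hb
    set σ : ℝ := if 0 ≤ s.im then 1 else -1 with hσ
    have ha0 : 0 ≤ a := Real.sqrt_nonneg _
    have hb0 : 0 ≤ b := Real.sqrt_nonneg _
    have ha2 : a ^ 2 = (‖s‖ + s.re) / 2 := Real.sq_sqrt (by linarith)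
    have hb2 : b ^ 2 = (‖s‖ - s.re) / 2 := Real.sq_sqrt (by linarith)
    have hsq : ‖s‖ ^ 2 = s.re ^ 2 + s.im ^ 2 := by
      rw [Complex.sq_norm, Complex.normSq_apply]; ring
    have hab : a * b = |s.im| / 2 := by
      rw [ha, hb, ← Real.sqrt_mul (by linarith)]
      have : (‖s‖ + s.re) / 2 * ((‖s‖ - s.re) / 2) = (s.im / 2) ^ 2 := by
        nlinarith
      rw [this, Real.sqrt_sq_eq_abs, abs_div]
      norm_num
    have hσb : σ * |s.im| = s.im := by
      rw [hσ]; split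
      · rw [abs_of_nonneg (by assumption)]; ring
      · rw [abs_of_neg (by linarith [lt_of_not_ge ‹¬ 0 ≤ s.im›])]; ring
    have hroot : ((⟨a, σ * b⟩ : ℂ)) ^ 2 = s := by
      apply Complex.ext
      · have hσ2 : σ * σ = 1 := by rw [hσ]; split <;> norm_num
        simp [pow_two, Complex.mul_re]
        nlinarith
      · simp [pow_two, Complex.mul_im]
        have : a * (σ * b) + σ * b * a = σ * (2 * (a * b)) := by ring
        rw [this, hab]
        rw [show σ * (2 * (|s.im| / 2)) = σ * |s.im| by ring, hσb]
    have := h _ hroot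
    have hac : a < c := this
    nlinarith
  · intro h μ hμ
    have h1 : s.re = μ.re ^ 2 - μ.im ^ 2 := by
      rw [← hμ]; simp [pow_two, Complex.mul_re]
    have h2 : ‖s‖ = μ.re ^ 2 + μ.im ^ 2 := by
      rw [← hμ, norm_pow, Complex.sq_norm, Complex.normSq_apply]; ring
    nlinarith [sq_nonneg (μ.re + c), sq_nonneg μ.im]

lemma key (ωb δb c : ℝ) (hc : 0 < c) (e : ℂ)
    (he : e ^ 2 = (δb : ℂ) ^ 2 - 4 * (ωb : ℂ) ^ 2) :
    (∀ μ : ℂ,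
        μ ^ 4 + 2 * μ ^ 2 * ((ωb : ℂ) ^ 2 - 1) + ((ωb : ℂ) ^ 2 + 1) ^ 2 - (δb : ℂ) ^ 2 = 0 →
        μ.re < c) ↔
    (‖1 - (ωb : ℂ) ^ 2 + e‖ + (1 - (ωb : ℂ) ^ 2 + e).re < 2 * c ^ 2 ∧
     ‖1 - (ωb : ℂ) ^ 2 - e‖ + (1 - (ωb : ℂ) ^ 2 - e).re < 2 * c ^ 2) := by
  rw [← root_pair c hc, ← root_pair c hc]
  have hfac : ∀ μ : ℂ,
      μ ^ 4 + 2 * μ ^ 2 * ((ωb : ℂ) ^ 2 - 1) + ((ωb : ℂ) ^ 2 + 1) ^ 2 - (δb : ℂ) ^ 2 =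
      (μ ^ 2 - (1 - (ωb : ℂ) ^ 2 + e)) * (μ ^ 2 - (1 - (ωb : ℂ) ^ 2 - e)) := fun μ => by
    linear_combination he
  constructor
  · intro h
    constructor <;> intro μ hμ <;> apply h <;> rw [hfac μ, hμ] <;> ring
  · rintro ⟨hp, hm⟩ μ hμ
    rw [hfac μ] at hμ
    rcases mul_eq_zero.mp hμ with h | h
    · exact hp μ (sub_eq_zero.mp h)
    · exact hm μ (sub_eq_zero.mp h)

lemma real_cond (c r : ℝ) (hc : 0 < c) : |r| + r < 2 * c ^ 2 ↔ r < c ^ 2 := by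
  rcases abs_cases r with ⟨h1, h2⟩ | ⟨h1, h2⟩ <;> constructor <;> intro h <;> nlinarith


/-- **Stability condition, skewness-threshold form.**  For `ω̄, δ̄ > 0` and `0 < c < 1`,
every complex root of `P(λ) = λ⁴ + 2λ²(ω̄² - 1) + (ω̄² + 1)² - δ̄²` has real part `< c`
iff `δ̄ > 2√(1 - c²)` and `√(√(δ̄² + 4c²) - 1 - c²) < ω̄ < √(δ̄²/(4(1 - c²)) - c²)`. -/
theorem stmt10 (ωb δb c : ℝ) (hωb : 0 < ωb) (hδb : 0 < δb) (hc0 : 0 < c) (hc1 : c < 1) :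
    (∀ μ : ℂ,
        μ ^ 4 + 2 * μ ^ 2 * ((ωb : ℂ) ^ 2 - 1) + ((ωb : ℂ) ^ 2 + 1) ^ 2 - (δb : ℂ) ^ 2 = 0 →
        μ.re < c) ↔
    (δb > 2 * Real.sqrt (1 - c ^ 2) ∧
      Real.sqrt (Real.sqrt (δb ^ 2 + 4 * c ^ 2) - 1 - c ^ 2) < ωb ∧
      ωb < Real.sqrt (δb ^ 2 / (4 * (1 - c ^ 2)) - c ^ 2)) := by
  have hk : 0 < 1 - c ^ 2 := by nlinarith
  have hR1 : (δb > 2 * Real.sqrt (1 - c ^ 2)) ↔ 4 * (1 - c ^ 2) < δb ^ 2 := by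
    have h4 : 2 * Real.sqrt (1 - c ^ 2) = Real.sqrt (4 * (1 - c ^ 2)) := by
      rw [Real.sqrt_mul (by norm_num : (0:ℝ) ≤ 4),
        show Real.sqrt 4 = 2 by
          rw [show (4:ℝ) = 2 ^ 2 by norm_num, Real.sqrt_sq (by norm_num)]]
    rw [gt_iff_lt, h4, Real.sqrt_lt' hδb]
  have hR2 : (Real.sqrt (Real.sqrt (δb ^ 2 + 4 * c ^ 2) - 1 - c ^ 2) < ωb) ↔
      δb ^ 2 + 4 * c ^ 2 < (ωb ^ 2 + 1 + c ^ 2) ^ 2 := by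
    rw [Real.sqrt_lt' hωb]
    have hpos : 0 < ωb ^ 2 + 1 + c ^ 2 := by positivity
    constructor
    · intro h
      have h' : Real.sqrt (δb ^ 2 + 4 * c ^ 2) < ωb ^ 2 + 1 + c ^ 2 := by linarith
      exact (Real.sqrt_lt' hpos).mp h'
    · intro h
      have := (Real.sqrt_lt' hpos).mpr h
      linarith
  have hR3 : (ωb < Real.sqrt (δb ^ 2 / (4 * (1 - c ^ 2)) - c ^ 2)) ↔
      4 * (ωb ^ 2 + c ^ 2) * (1 - c ^ 2) < δb ^ 2 := by
    rw [Real.lt_sqrt hωb.le, lt_sub_iff_add_lt, lt_div_iff₀ (by positivity)]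
    constructor <;> intro h <;> nlinarith
  rw [hR1, hR2, hR3]
  clear hR1 hR2 hR3
  have hω2 : 0 < ωb ^ 2 := by positivity
  rcases le_or_gt 0 (δb ^ 2 - 4 * ωb ^ 2) with hD | hD
  · -- real discriminant case
    obtain ⟨r, hr0, hr2⟩ : ∃ r : ℝ, 0 ≤ r ∧ r ^ 2 = δb ^ 2 - 4 * ωb ^ 2 :=
      ⟨Real.sqrt _, Real.sqrt_nonneg _, Real.sq_sqrt hD⟩
    have he : ((r : ℂ)) ^ 2 = (δb : ℂ) ^ 2 - 4 * (ωb : ℂ) ^ 2 := by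
      rw [show ((r : ℂ)) ^ 2 = ((r ^ 2 : ℝ) : ℂ) by push_cast; ring, hr2]
      push_cast; ring
    rw [key ωb δb c hc0 (r : ℂ) he]
    have e1 : (1 - (ωb : ℂ) ^ 2 + (r : ℂ)) = ((1 - ωb ^ 2 + r : ℝ) : ℂ) := by push_cast; ring
    have e2 : (1 - (ωb : ℂ) ^ 2 - (r : ℂ)) = ((1 - ωb ^ 2 - r : ℝ) : ℂ) := by push_cast; ring
    rw [e1, e2, Complex.norm_real, Complex.norm_real, Real.norm_eq_abs, Real.norm_eq_abs, Complex.ofReal_re, Complex.ofReal_re,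
      real_cond c _ hc0, real_cond c _ hc0]
    constructor
    · rintro ⟨hp, hm⟩
      have ht : 1 - c ^ 2 + r < ωb ^ 2 := by linarith
      refine ⟨by nlinarith, ?_, ?_⟩
      · nlinarith [mul_self_lt_mul_self hr0 (show r < ωb ^ 2 - 1 + c ^ 2 by linarith)]
      · nlinarith [mul_nonneg (mul_nonneg hc0.le hc0.le) hr0,
          mul_pos (mul_pos hc0 hc0) (show (0:ℝ) < ωb ^ 2 - 1 + c ^ 2 - r by linarith)]
    · rintro ⟨h1, h2, h3⟩
      have ht : 1 - c ^ 2 < ωb ^ 2 := by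
        by_contra hcon
        push_neg at hcon
        have hu : 0 ≤ 1 - c ^ 2 - ωb ^ 2 := by linarith
        nlinarith [mul_nonneg hu (show (0:ℝ) ≤ c ^ 2 + ωb ^ 2 by positivity)]
      have hrlt : r < ωb ^ 2 - 1 + c ^ 2 := by
        by_contra hcon
        push_neg at hcon
        nlinarith [mul_nonneg (show (0:ℝ) ≤ r - (ωb ^ 2 - 1 + c ^ 2) by linarith)
          (show (0:ℝ) ≤ r + (ωb ^ 2 - 1 + c ^ 2) by linarith)]
      constructor <;> linarith
  · -- complex discriminant case
    obtain ⟨r, hr0, hr2⟩ : ∃ r : ℝ, 0 ≤ r ∧ r ^ 2 = 4 * ωb ^ 2 - δb ^ 2 :=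
      ⟨Real.sqrt _, Real.sqrt_nonneg _, Real.sq_sqrt (by linarith)⟩
    have he : (Complex.I * (r : ℂ)) ^ 2 = (δb : ℂ) ^ 2 - 4 * (ωb : ℂ) ^ 2 := by
      have h' : (Complex.I * (r : ℂ)) ^ 2 = -((r ^ 2 : ℝ) : ℂ) := by
        rw [mul_pow, Complex.I_sq]; push_cast; ring
      rw [h', hr2]; push_cast; ring
    rw [key ωb δb c hc0 _ he]
    have e1 : (1 - (ωb : ℂ) ^ 2 + Complex.I * (r : ℂ)) =
        ((1 - ωb ^ 2 : ℝ) : ℂ) + ((r : ℝ) : ℂ) * Complex.I := by push_cast; ring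
    have e2 : (1 - (ωb : ℂ) ^ 2 - Complex.I * (r : ℂ)) =
        ((1 - ωb ^ 2 : ℝ) : ℂ) + ((-r : ℝ) : ℂ) * Complex.I := by push_cast; ring
    have habs1 : ‖1 - (ωb : ℂ) ^ 2 + Complex.I * (r : ℂ)‖ =
        Real.sqrt ((1 - ωb ^ 2) ^ 2 + r ^ 2) := by
      rw [e1, Complex.norm_add_mul_I]
    have habs2 : ‖1 - (ωb : ℂ) ^ 2 - Complex.I * (r : ℂ)‖ =
        Real.sqrt ((1 - ωb ^ 2) ^ 2 + r ^ 2) := by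
      rw [e2, Complex.norm_add_mul_I]; norm_num
    have hre1 : (1 - (ωb : ℂ) ^ 2 + Complex.I * (r : ℂ)).re = 1 - ωb ^ 2 := by
      rw [e1]; simp [← Complex.ofReal_pow]
    have hre2 : (1 - (ωb : ℂ) ^ 2 - Complex.I * (r : ℂ)).re = 1 - ωb ^ 2 := by
      rw [e2]; simp [← Complex.ofReal_pow]
    rw [habs1, habs2, hre1, hre2, and_self]
    have hcond : (Real.sqrt ((1 - ωb ^ 2) ^ 2 + r ^ 2) + (1 - ωb ^ 2) < 2 * c ^ 2) ↔
        (0 < ωb ^ 2 + 2 * c ^ 2 - 1 ∧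
          (1 - ωb ^ 2) ^ 2 + r ^ 2 < (ωb ^ 2 + 2 * c ^ 2 - 1) ^ 2) := by
      constructor
      · intro h
        have hy : 0 < ωb ^ 2 + 2 * c ^ 2 - 1 := by
          have := Real.sqrt_nonneg ((1 - ωb ^ 2) ^ 2 + r ^ 2)
          linarith
        refine ⟨hy, ?_⟩
        have h' : Real.sqrt ((1 - ωb ^ 2) ^ 2 + r ^ 2) < ωb ^ 2 + 2 * c ^ 2 - 1 := by linarith
        exact (Real.sqrt_lt' hy).mp h'
      · rintro ⟨hy, h⟩
        have := (Real.sqrt_lt' hy).mpr h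
        linarith
    rw [hcond]
    clear hcond habs1 habs2 hre1 hre2 e1 e2 he
    constructor
    · rintro ⟨hy, h⟩
      have h3' : 4 * (ωb ^ 2 + c ^ 2) * (1 - c ^ 2) < δb ^ 2 := by nlinarith
      have ht : 1 - c ^ 2 < ωb ^ 2 := by
        by_contra hcon
        push_neg at hcon
        nlinarith [mul_nonneg (mul_nonneg hc0.le hc0.le)
          (show (0:ℝ) ≤ 1 - c ^ 2 - ωb ^ 2 by linarith)]
      refine ⟨?_, ?_, h3'⟩
      · nlinarith [mul_pos hk (show (0:ℝ) < ωb ^ 2 + c ^ 2 - 1 by linarith)]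
      · nlinarith [sq_nonneg (ωb ^ 2 - 1 + c ^ 2)]
    · rintro ⟨h1, h2, h3⟩
      have ht : 1 - c ^ 2 < ωb ^ 2 := by
        by_contra hcon
        push_neg at hcon
        nlinarith [mul_nonneg (mul_nonneg hc0.le hc0.le)
          (show (0:ℝ) ≤ 1 - c ^ 2 - ωb ^ 2 by linarith)]
      refine ⟨by nlinarith, by nlinarith⟩
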